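/- Let q = p^n with q ≡ 1 (mod 2k), k ≥ 2, and suppose F_p^× ≤ (F_q^×)^k. In the generalized Paley graph P(q,k), for the edge {0,1}, there exists a perfect matching between N₀ = Γ(0) \ (∇ ∪ {1}) and N₁ = Γ(1) \ (∇ ∪ {0}), where Γ(v) = v + (F_q^×)^k and ∇ = Γ(0) ∩ Γ(1). -/
import Mathlib


/-- Neighbor set of `v` in the generalized Paley graph `P(q,k)`:
`Γ(v) = v + (F_q^×)^k`. -/
def paleyGamma (p n k : ℕ) [Fact p.Prime] (v : GaloisField p n) :
    Set (GaloisField p n) :=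
  {x | ∃ c : GaloisField p n, c ≠ 0 ∧ c ^ k = x - v}

private lemma matching_aux {F : Type*} [Field F] (p : ℕ) (hp : p.Prime) [CharP F p]
    (S : F → Prop) (hS0 : ∀ z, S z → z ≠ 0) (hSp : ∀ a : ℕ, ¬ p ∣ a → S (a : F))
    (N₀ N₁ : Set F)
    (hN₀ : ∀ z, z ∈ N₀ ↔ S z ∧ ¬ S (z - 1) ∧ z ≠ 1)
    (hN₁ : ∀ z, z ∈ N₁ ↔ ¬ S z ∧ S (z - 1) ∧ z ≠ 0) :
    ∃ f : N₀ ≃ N₁, ∀ x : N₀, S ((x : F) - ((f x : N₁) : F)) := by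
  classical
  have hp1 : (p : F) = 0 := CharP.cast_eq_zero F p
  -- from a point of S at distance c below z (with ¬ S (z-1)), find an "ascent" at distance ≤ c-1
  have key₁ : ∀ z : F, ¬ S (z - 1) → ∀ c : ℕ, 1 ≤ c → S (z - c) →
      ∃ t : ℕ, (1 ≤ t ∧ ¬ S (z - t) ∧ S (z - t - 1)) ∧ t ≤ c - 1 := by
    intro z hz1 c hc hSc
    have hc1 : c ≠ 1 := by
      rintro rfl
      exact hz1 (by simpa using hSc)
    have hc2 : 2 ≤ c := by omega
    set Q : Set ℕ := {t : ℕ | 2 ≤ t ∧ S (z - t)} with hQ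
    have hne : Q.Nonempty := ⟨c, hc2, hSc⟩
    obtain ⟨hu2, huS⟩ : 2 ≤ sInf Q ∧ S (z - (sInf Q : ℕ)) := Nat.sInf_mem hne
    set u := sInf Q with hu
    have huc : u ≤ c := Nat.sInf_le ⟨hc2, hSc⟩
    refine ⟨u - 1, ⟨by omega, ?_, ?_⟩, by omega⟩
    · by_cases h1 : u - 1 = 1
      · rw [h1]; simpa using hz1
      · intro hS
        have : u ≤ u - 1 := Nat.sInf_le ⟨by omega, hS⟩
        omega
    · have hcast : z - ((u - 1 : ℕ) : F) - 1 = z - (u : F) := by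
        have h : (u : ℕ) = (u - 1) + 1 := by omega
        rw [h]; push_cast; ring
      rw [hcast]; exact huS
  -- from a point of S at distance c-1 above w (with ¬ S w), find a "descent" at distance ≤ c-1
  have key₂ : ∀ w : F, ¬ S w → ∀ c : ℕ, 1 ≤ c → S (w + c - 1) →
      ∃ t : ℕ, (1 ≤ t ∧ S (w + t) ∧ ¬ S (w + t - 1)) ∧ t ≤ c - 1 := by
    intro w hw c hc hSc
    have hc1 : c ≠ 1 := by
      rintro rfl
      exact hw (by simpa using hSc)
    have hc2 : 2 ≤ c := by omega
    set Q : Set ℕ := {t : ℕ | 1 ≤ t ∧ S (w + t)} with hQ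
    have hmem : (c - 1 : ℕ) ∈ Q := by
      refine ⟨by omega, ?_⟩
      have hcast : w + ((c - 1 : ℕ) : F) = w + (c : F) - 1 := by
        have h : (c : ℕ) = (c - 1) + 1 := by omega
        rw [h]; push_cast; ring
      rw [hcast]; exact hSc
    have hne : Q.Nonempty := ⟨c - 1, hmem⟩
    obtain ⟨hu1, huS⟩ : 1 ≤ sInf Q ∧ S (w + (sInf Q : ℕ)) := Nat.sInf_mem hne
    set u := sInf Q with hu
    have huc : u ≤ c - 1 := Nat.sInf_le hmem
    refine ⟨u, ⟨hu1, huS, ?_⟩, huc⟩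
    by_cases h1 : u = 1
    · rw [h1]; simpa using hw
    · intro hS
      have hcast : w + ((u - 1 : ℕ) : F) = w + (u : F) - 1 := by
        have h : (u : ℕ) = (u - 1) + 1 := by omega
        rw [h]; push_cast; ring
      have : u ≤ u - 1 := Nat.sInf_le ⟨by omega, by rw [hcast]; exact hS⟩
      omega
  -- the matching functions
  set aN : F → ℕ := fun z => sInf {t : ℕ | 1 ≤ t ∧ ¬ S (z - t) ∧ S (z - t - 1)} with haN_def
  set bN : F → ℕ := fun w => sInf {t : ℕ | 1 ≤ t ∧ S (w + t) ∧ ¬ S (w + t - 1)} with hbN_def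
  have haN : ∀ z : F, S z → ¬ S (z - 1) →
      1 ≤ aN z ∧ ¬ S (z - (aN z : ℕ)) ∧ S (z - (aN z : ℕ) - 1) := by
    intro z hz hz1
    obtain ⟨t, ht, -⟩ := key₁ z hz1 p hp.one_lt.le (by rw [hp1, sub_zero]; exact hz)
    have hne : {t : ℕ | 1 ≤ t ∧ ¬ S (z - t) ∧ S (z - t - 1)}.Nonempty := ⟨t, ht⟩
    exact Nat.sInf_mem hne
  have hbN : ∀ w : F, ¬ S w → S (w - 1) →
      1 ≤ bN w ∧ S (w + (bN w : ℕ)) ∧ ¬ S (w + (bN w : ℕ) - 1) := by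
    intro w hw hw1
    obtain ⟨t, ht, -⟩ := key₂ w hw p hp.one_lt.le (by rw [hp1, add_zero]; exact hw1)
    have hne : {t : ℕ | 1 ≤ t ∧ S (w + t) ∧ ¬ S (w + t - 1)}.Nonempty := ⟨t, ht⟩
    exact Nat.sInf_mem hne
  -- a natural number not divisible by p, cast to F, is in S; and casting reduces mod p
  have hmodcast : ∀ a : ℕ, ((a : ℕ) : F) = ((a % p : ℕ) : F) := by
    intro a
    conv_lhs => rw [← Nat.div_add_mod a p]
    push_cast
    rw [hp1]; ring
  -- membership of images
  have hf_mem : ∀ z ∈ N₀, (z - (aN z : ℕ)) ∈ N₁ := by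
    intro z hz
    rw [hN₀] at hz
    obtain ⟨hzS, hz1, hzne⟩ := hz
    obtain ⟨ha1, haS, haS1⟩ := haN z hzS hz1
    rw [hN₁]
    refine ⟨haS, haS1, ?_⟩
    intro h0
    have hz' : z = ((aN z : ℕ) : F) := by
      have := sub_eq_zero.mp h0; exact this
    set r := aN z % p with hr
    have hrp : r < p := Nat.mod_lt _ hp.pos
    have hz'' : z = ((r : ℕ) : F) := by rw [hz', hmodcast]
    rcases Nat.lt_or_ge r 1 with h | h
    · have : r = 0 := by omega
      exact hS0 z hzS (by rw [hz'', this]; simp)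
    rcases Nat.lt_or_ge r 2 with h2 | h2
    · have : r = 1 := by omega
      exact hzne (by rw [hz'', this]; simp)
    · apply hz1
      have hcast : z - 1 = ((r - 1 : ℕ) : F) := by
        rw [hz'']
        have h : (r : ℕ) = (r - 1) + 1 := by omega
        rw [h]; push_cast; ring
      rw [hcast]
      exact hSp _ (Nat.not_dvd_of_pos_of_lt (by omega) (by omega))
  have hg_mem : ∀ w ∈ N₁, (w + (bN w : ℕ)) ∈ N₀ := by
    intro w hw
    rw [hN₁] at hw
    obtain ⟨hwS, hw1, hwne⟩ := hw
    obtain ⟨hb1, hbS, hbS1⟩ := hbN w hwS hw1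
    rw [hN₀]
    refine ⟨hbS, hbS1, ?_⟩
    intro h1
    have hw' : w = 1 - ((bN w : ℕ) : F) := by
      rw [← h1]; ring
    set r := bN w % p with hr
    have hrp : r < p := Nat.mod_lt _ hp.pos
    have hw'' : w = 1 - ((r : ℕ) : F) := by rw [hw', hmodcast]
    rcases Nat.lt_or_ge r 1 with h | h
    · have h0 : r = 0 := by omega
      apply hS0 (w - 1) hw1
      rw [hw'', h0]; simp
    rcases Nat.lt_or_ge r 2 with h2 | h2
    · have : r = 1 := by omega
      exact hwne (by rw [hw'', this]; simp)
    · apply hwS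
      have hcast : w = ((p + 1 - r : ℕ) : F) := by
        rw [hw'']
        have h : (p + 1 - r : ℕ) = p + 1 - r := rfl
        have h' : ((p + 1 - r : ℕ) : F) = (p : F) + 1 - (r : F) := by
          have hle : r ≤ p + 1 := by omega
          push_cast [Nat.cast_sub hle]
          ring
        rw [h', hp1]; ring
      rw [hcast]
      exact hSp _ (Nat.not_dvd_of_pos_of_lt (by omega) (by omega))
  -- left inverse
  have hleft : ∀ z ∈ N₀, (z - (aN z : ℕ)) + (bN (z - (aN z : ℕ)) : ℕ) = z := by
    intro z hz
    rw [hN₀] at hz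
    obtain ⟨hzS, hz1, hzne⟩ := hz
    obtain ⟨ha1, haS, haS1⟩ := haN z hzS hz1
    set a := aN z with ha
    set w := z - (a : ℕ) with hwdef
    have hba : bN w ≤ a := by
      apply Nat.sInf_le
      refine ⟨ha1, ?_, ?_⟩
      · have : w + (a : F) = z := by rw [hwdef]; ring
        rw [this]; exact hzS
      · have : w + (a : F) - 1 = z - 1 := by rw [hwdef]; ring
        rw [this]; exact hz1
    obtain ⟨hb1, hbS, hbS1⟩ := hbN w haS haS1
    have hbe : bN w = a := by
      by_contra hne
      have hblt : bN w < a := by omega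
      set b := bN w with hb
      set c := a - b with hc
      have hc1 : 1 ≤ c := by omega
      have hcast : w + (b : F) = z - ((c : ℕ) : F) := by
        rw [hwdef, hc, Nat.cast_sub hblt.le]; ring
      obtain ⟨t, ⟨ht1, htS, htS1⟩, htc⟩ := key₁ z hz1 c hc1 (by rw [← hcast]; exact hbS)
      have : a ≤ t := Nat.sInf_le ⟨ht1, htS, htS1⟩
      omega
    rw [hbe]
    rw [hwdef]; ring
  -- right inverse
  have hright : ∀ w ∈ N₁, (w + (bN w : ℕ)) - (aN (w + (bN w : ℕ)) : ℕ) = w := by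
    intro w hw
    rw [hN₁] at hw
    obtain ⟨hwS, hw1, hwne⟩ := hw
    obtain ⟨hb1, hbS, hbS1⟩ := hbN w hwS hw1
    set b := bN w with hb
    set z := w + (b : ℕ) with hzdef
    have hab : aN z ≤ b := by
      apply Nat.sInf_le
      refine ⟨hb1, ?_, ?_⟩
      · have : z - (b : F) = w := by rw [hzdef]; ring
        rw [this]; exact hwS
      · have : z - (b : F) - 1 = w - 1 := by rw [hzdef]; ring
        rw [this]; exact hw1
    obtain ⟨ha1, haS, haS1⟩ := haN z hbS hbS1
    have hae : aN z = b := by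
      by_contra hne
      have halt : aN z < b := by omega
      set a := aN z with ha
      set c := b - a with hc
      have hc1 : 1 ≤ c := by omega
      have hcast : z - (a : F) = w + ((c : ℕ) : F) := by
        rw [hzdef, hc, Nat.cast_sub halt.le]; ring
      have hcast1 : z - (a : F) - 1 = w + ((c : ℕ) : F) - 1 := by rw [hcast]
      obtain ⟨t, ⟨ht1, htS, htS1⟩, htc⟩ := key₂ w hwS c hc1 (by rw [← hcast1]; exact haS1)
      have : b ≤ t := Nat.sInf_le ⟨ht1, htS, htS1⟩
      omega
    rw [hae]
    rw [hzdef]; ring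
  -- build the equivalence
  refine ⟨{ toFun := fun z => ⟨(z : F) - (aN (z : F) : ℕ), hf_mem _ z.2⟩
            invFun := fun w => ⟨(w : F) + (bN (w : F) : ℕ), hg_mem _ w.2⟩
            left_inv := fun z => Subtype.ext (hleft _ z.2)
            right_inv := fun w => Subtype.ext (hright _ w.2) }, ?_⟩
  intro x
  simp only [Equiv.coe_fn_mk]
  have hx := x.2
  rw [hN₀] at hx
  obtain ⟨hzS, hz1, hzne⟩ := hx
  obtain ⟨ha1, haS, haS1⟩ := haN (x : F) hzS hz1
  have hcast : (x : F) - ((x : F) - (aN (x : F) : ℕ)) = ((aN (x : F) : ℕ) : F) := by ring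
  rw [hcast, hmodcast]
  set r := aN (x : F) % p with hr
  have hrp : r < p := Nat.mod_lt _ hp.pos
  have hrne : r ≠ 0 := by
    intro h0
    apply haS
    have : ((aN (x : F) : ℕ) : F) = 0 := by rw [hmodcast, ← hr, h0]; simp
    rw [this, sub_zero]; exact hzS
  exact hSp _ (Nat.not_dvd_of_pos_of_lt (by omega) (by omega))

theorem stmt18 (p n k : ℕ) [Fact p.Prime] (hk : 2 ≤ k)
    (hq : p ^ n ≡ 1 [MOD 2 * k])
    (hsub : ∀ a : ZMod p, a ≠ 0 → ∃ b : GaloisField p n, b ≠ 0 ∧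
      b ^ k = algebraMap (ZMod p) (GaloisField p n) a)
    (N₀ N₁ : Set (GaloisField p n))
    (hN₀ : N₀ = paleyGamma p n k 0 \ ((paleyGamma p n k 0 ∩ paleyGamma p n k 1) ∪ {1}))
    (hN₁ : N₁ = paleyGamma p n k 1 \ ((paleyGamma p n k 0 ∩ paleyGamma p n k 1) ∪ {0})) :
    ∃ f : N₀ ≃ N₁, ∀ x : N₀,
      ∃ c : GaloisField p n, c ≠ 0 ∧ c ^ k = (x : GaloisField p n) - (f x : GaloisField p n) := by
  classical
  subst hN₀ hN₁
  obtain ⟨S, hS_def⟩ : ∃ S : GaloisField p n → Prop,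
      S = fun z => ∃ c : GaloisField p n, c ≠ 0 ∧ c ^ k = z := ⟨_, rfl⟩
  have hS0 : ∀ z, S z → z ≠ 0 := by
    rw [hS_def]
    rintro z ⟨c, hc, rfl⟩
    exact pow_ne_zero k hc
  have hSp : ∀ a : ℕ, ¬ p ∣ a → S ((a : ℕ) : GaloisField p n) := by
    rw [hS_def]
    intro a ha
    have hz : ((a : ℕ) : ZMod p) ≠ 0 := by
      rwa [Ne, ZMod.natCast_eq_zero_iff]
    obtain ⟨b, hb, hbk⟩ := hsub _ hz
    exact ⟨b, hb, by rw [hbk, map_natCast]⟩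
  have hG0 : ∀ z : GaloisField p n, z ∈ paleyGamma p n k 0 ↔ S z := by
    intro z
    simp only [paleyGamma, Set.mem_setOf_eq, sub_zero, hS_def]
  have hG1 : ∀ z : GaloisField p n, z ∈ paleyGamma p n k 1 ↔ S (z - 1) := by
    intro z
    simp only [paleyGamma, Set.mem_setOf_eq, hS_def]
  have hmem0 : ∀ z, z ∈ paleyGamma p n k 0 \ ((paleyGamma p n k 0 ∩ paleyGamma p n k 1) ∪ {1}) ↔ S z ∧ ¬ S (z - 1) ∧ z ≠ 1 := by
    intro z
    rw [Set.mem_diff, Set.mem_union, Set.mem_inter_iff, Set.mem_singleton_iff, hG0, hG1]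
    tauto
  have hmem1 : ∀ z, z ∈ paleyGamma p n k 1 \ ((paleyGamma p n k 0 ∩ paleyGamma p n k 1) ∪ {0}) ↔ ¬ S z ∧ S (z - 1) ∧ z ≠ 0 := by
    intro z
    rw [Set.mem_diff, Set.mem_union, Set.mem_inter_iff, Set.mem_singleton_iff, hG0, hG1]
    tauto
  obtain ⟨f, hf⟩ := matching_aux p (Fact.out) S hS0 hSp _ _ hmem0 hmem1
  refine ⟨f, fun x => ?_⟩
  have hx := hf x
  rw [hS_def] at hx
  exact hx
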